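/- Let R and I be symmetric real n×n matrices, regarded as symmetric complex-bilinear forms on ℂⁿ, and set H = R + iI. Assume I is positive semidefinite, i.e. wᵀIw ≥ 0 for all w ∈ ℝⁿ. Then for any v ∈ ℂⁿ, writing v = v_r + i·v_a with v_r, v_a ∈ ℝⁿ, the following are equivalent: (1) Hv = 0 (equivalently H(w,v) = 0 for all w ∈ ℂⁿ); (2) R v_r = R v_a = I v_r = I v_a = 0. -/

import Mathlib

open Matrix

/-- Mapping a real matrix-vector product to ℂ. -/
lemma mulVec_map_ofReal {n : ℕ} (M : Matrix (Fin n) (Fin n) ℝ) (x : Fin n → ℝ) :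
    (M.map (fun t => (t : ℂ))) *ᵥ (fun k => (x k : ℂ)) = fun k => ((M *ᵥ x) k : ℂ) := by
  funext k
  have := (Complex.ofRealHom.map_mulVec M x k).symm
  exact this

/-- For `H = R + iI` with `R, I` real symmetric and `I` positive semidefinite,
a complex vector `v = v_r + i v_a` is annihilated by `H` iff its real and
imaginary parts are annihilated by both `R` and `I`. -/
theorem annihilation_of_H_iff_real_imaginary_parts
    {n : ℕ} (R I : Matrix (Fin n) (Fin n) ℝ)
    (hRsymm : R.IsSymm) (hIsymm : I.IsSymm)
    (hIpsd : ∀ w : Fin n → ℝ, 0 ≤ w ⬝ᵥ (I *ᵥ w))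
    (H : Matrix (Fin n) (Fin n) ℂ)
    (hH : H = R.map (fun x => (x : ℂ)) + Complex.I • I.map (fun x => (x : ℂ)))
    (vr va : Fin n → ℝ) (v : Fin n → ℂ)
    (hv : v = fun k => (vr k : ℂ) + Complex.I * (va k : ℂ)) :
    H *ᵥ v = 0 ↔ (R *ᵥ vr = 0 ∧ R *ᵥ va = 0 ∧ I *ᵥ vr = 0 ∧ I *ᵥ va = 0) := by
  -- First compute H *ᵥ v explicitly.
  have hveq : v = (fun k => (vr k : ℂ)) + Complex.I • (fun k => (va k : ℂ)) := by
    funext k; simp [hv, Pi.smul_apply, smul_eq_mul]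
  have key : H *ᵥ v = fun k =>
      (((R *ᵥ vr) k - (I *ᵥ va) k : ℝ) : ℂ)
      + Complex.I * (((R *ᵥ va) k + (I *ᵥ vr) k : ℝ) : ℂ) := by
    subst hH
    rw [hveq]
    funext k
    simp only [add_mulVec, mulVec_add, mulVec_smul, smul_mulVec, Pi.add_apply,
      Pi.smul_apply, smul_eq_mul]
    have h1 := congrFun (mulVec_map_ofReal R vr) k
    have h2 := congrFun (mulVec_map_ofReal R va) k
    have h3 := congrFun (mulVec_map_ofReal I vr) k
    have h4 := congrFun (mulVec_map_ofReal I va) k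
    rw [h1, h2, h3, h4]
    push_cast
    ring_nf
    simp [Complex.I_sq]
    ring
  have keyiff : H *ᵥ v = 0 ↔ (R *ᵥ vr - I *ᵥ va = 0 ∧ R *ᵥ va + I *ᵥ vr = 0) := by
    rw [key]
    constructor
    · intro h
      have h' : ∀ k, (((R *ᵥ vr - I *ᵥ va) k : ℝ) : ℂ)
          + Complex.I * (((R *ᵥ va + I *ᵥ vr) k : ℝ) : ℂ) = 0 := by
        intro k
        have := congrFun h k
        simpa using this
      constructor
      · funext k
        have := h' k
        have hre := congrArg Complex.re this
        simpa [Complex.add_re, Complex.mul_re] using hre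
      · funext k
        have := h' k
        have him := congrArg Complex.im this
        simpa [Complex.add_im, Complex.mul_im] using him
    · rintro ⟨h1, h2⟩
      funext k
      have e1 : (R *ᵥ vr) k - (I *ᵥ va) k = 0 := congrFun h1 k
      have e2 : (R *ᵥ va) k + (I *ᵥ vr) k = 0 := congrFun h2 k
      simp [e1, e2]
  rw [keyiff]
  constructor
  · rintro ⟨h1, h2⟩
    have hRvr : R *ᵥ vr = I *ᵥ va := by
      funext k; have := congrFun h1 k; simp at this; linarith [this]
    have hRva : R *ᵥ va = -(I *ᵥ vr) := by
      funext k; have := congrFun h2 k; simp at this ⊢; linarith [this]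
    -- vr ⬝ R va = (R vr) ⬝ va = (I va) ⬝ va  ≥ 0, and also = -vr ⬝ I vr ≤ 0
    have hdot : vr ⬝ᵥ (R *ᵥ va) = va ⬝ᵥ (I *ᵥ va) := by
      rw [Matrix.dotProduct_mulVec, ← Matrix.mulVec_transpose, hRsymm, hRvr,
        dotProduct_comm]
    have hdot2 : vr ⬝ᵥ (R *ᵥ va) = -(vr ⬝ᵥ (I *ᵥ vr)) := by
      rw [hRva, dotProduct_neg]
    have hz1 : va ⬝ᵥ (I *ᵥ va) = 0 := by
      have := hIpsd va; have := hIpsd vr; linarith [hdot, hdot2, hIpsd va, hIpsd vr]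
    have hz2 : vr ⬝ᵥ (I *ᵥ vr) = 0 := by
      linarith [hdot, hdot2, hIpsd va, hIpsd vr]
    have hIH : I.IsHermitian := by
      rwa [Matrix.IsHermitian, Matrix.conjTranspose_eq_transpose_of_trivial]
    have hpsd : I.PosSemidef := Matrix.posSemidef_iff_dotProduct_mulVec.mpr ⟨hIH, fun x => by simpa using hIpsd x⟩
    have hIvr : I *ᵥ vr = 0 := (hpsd.dotProduct_mulVec_zero_iff vr).mp (by simpa using hz2)
    have hIva : I *ᵥ va = 0 := (hpsd.dotProduct_mulVec_zero_iff va).mp (by simpa using hz1)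
    refine ⟨?_, ?_, hIvr, hIva⟩
    · rw [hRvr, hIva]
    · rw [hRva, hIvr, neg_zero]
  · rintro ⟨h1, h2, h3, h4⟩
    rw [h1, h2, h3, h4]
    simp
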